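/- Let Q ∈ ℝ^{n×r} have orthonormal columns and I a size-r index set with Q(I,:) invertible. Then for the interpolatory projection P = Q Q(I,:)^{-1} E_I^T, the operator norm satisfies ‖P‖₂ = ‖Q(I,:)^{-1}‖₂ when r < n (and ‖P‖₂ ≥ 1 in general), so the error of interpolatory projection is bounded by ‖Z − PZ‖₂ ≤ ‖Q(I,:)^{-1}‖₂ · ‖(I − QQ^T)Z‖₂ for any Z ∈ ℝ^{n×m}. -/

import Mathlib

open Matrix

/-- The `n × r` column-selection matrix `E_I = Id(:,I)` associated to the
index selection `g : Fin r → Fin n`. -/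
def selId {n r : ℕ} (g : Fin r → Fin n) : Matrix (Fin n) (Fin r) ℝ :=
  Matrix.of fun i α => if i = g α then (1 : ℝ) else 0

/-- The spectral (ℓ² operator) norm of a real matrix. -/
noncomputable def specNorm {a b : ℕ} (A : Matrix (Fin a) (Fin b) ℝ) : ℝ :=
  ‖LinearMap.toContinuousLinearMap (Matrix.toEuclideanLin A)‖

/- ### Auxiliary machinery -/

noncomputable def mclm {a b : ℕ} (A : Matrix (Fin a) (Fin b) ℝ) :
    EuclideanSpace ℝ (Fin b) →L[ℝ] EuclideanSpace ℝ (Fin a) :=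
  LinearMap.toContinuousLinearMap (Matrix.toEuclideanLin A)

lemma specNorm_eq_mclm {a b : ℕ} (A : Matrix (Fin a) (Fin b) ℝ) :
    specNorm A = ‖mclm A‖ := rfl

lemma mclm_mul_apply {a b c : ℕ} (A : Matrix (Fin a) (Fin b) ℝ) (B : Matrix (Fin b) (Fin c) ℝ)
    (x : EuclideanSpace ℝ (Fin c)) : mclm (A * B) x = mclm A (mclm B x) := by
  simp [mclm, Matrix.toEuclideanLin_apply, Matrix.mulVec_mulVec]

lemma normsq_eq {a : ℕ} (x : EuclideanSpace ℝ (Fin a)) :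
    ‖x‖ ^ 2 = (WithLp.equiv 2 _ x) ⬝ᵥ (WithLp.equiv 2 _ x) := by
  rw [EuclideanSpace.norm_eq, Real.sq_sqrt (by positivity)]
  simp [dotProduct, sq_abs, pow_two]

lemma mclm_apply_dot {a b : ℕ} (A : Matrix (Fin a) (Fin b) ℝ) (x : EuclideanSpace ℝ (Fin b)) :
    ‖mclm A x‖ ^ 2 = (WithLp.equiv 2 _ x) ⬝ᵥ ((Aᵀ * A) *ᵥ (WithLp.equiv 2 _ x)) := by
  rw [normsq_eq]
  simp only [mclm, LinearMap.coe_toContinuousLinearMap', WithLp.equiv_apply, Matrix.ofLp_toEuclideanLin_apply]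
  rw [← Matrix.mulVec_mulVec, Matrix.dotProduct_mulVec, ← Matrix.mulVec_transpose,
    dotProduct_comm]

lemma mclm_isometry {a b : ℕ} {A : Matrix (Fin a) (Fin b) ℝ} (hA : Aᵀ * A = 1)
    (x : EuclideanSpace ℝ (Fin b)) : ‖mclm A x‖ = ‖x‖ := by
  have h := mclm_apply_dot A x
  rw [hA, Matrix.one_mulVec, ← normsq_eq] at h
  rw [← Real.sqrt_sq (norm_nonneg (mclm A x)), ← Real.sqrt_sq (norm_nonneg x), h]

lemma selId_T_mul_self {n r : ℕ} {g : Fin r → Fin n} (hg : Function.Injective g) :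
    (selId g)ᵀ * selId g = 1 := by
  ext α β
  simp [selId, Matrix.mul_apply, Matrix.one_apply, ite_and, hg.eq_iff, eq_comm]

lemma selId_T_mul {n r : ℕ} (g : Fin r → Fin n) (Q : Matrix (Fin n) (Fin r) ℝ) :
    (selId g)ᵀ * Q = Q.submatrix g id := by
  ext α j
  simp [selId, Matrix.mul_apply]

lemma selId_T_mulVec {n r : ℕ} (g : Fin r → Fin n) (v : Fin n → ℝ) (α : Fin r) :
    ((selId g)ᵀ *ᵥ v) α = v (g α) := by
  simp [selId, Matrix.mulVec, dotProduct]

lemma mclm_selId_T_le {n r : ℕ} {g : Fin r → Fin n} (hg : Function.Injective g)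
    (x : EuclideanSpace ℝ (Fin n)) : ‖mclm (selId g)ᵀ x‖ ≤ ‖x‖ := by
  set v := WithLp.equiv 2 (Fin n → ℝ) x with hv
  have h1 : ‖mclm (selId g)ᵀ x‖ ^ 2 = ∑ α : Fin r, v (g α) * v (g α) := by
    rw [normsq_eq]
    simp only [mclm, LinearMap.coe_toContinuousLinearMap', WithLp.equiv_apply, Matrix.ofLp_toEuclideanLin_apply]
    simp [dotProduct, selId_T_mulVec, hv]
  have h2 : ∑ α : Fin r, v (g α) * v (g α) ≤ ∑ i : Fin n, v i * v i := by
    have him := Finset.sum_image (s := Finset.univ) (g := g) (f := fun i => v i * v i)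
      (fun a _ b _ h => hg h)
    rw [← him]
    exact Finset.sum_le_sum_of_subset_of_nonneg (Finset.subset_univ _)
      (fun i _ _ => mul_self_nonneg _)
  have h3 : ‖mclm (selId g)ᵀ x‖ ^ 2 ≤ ‖x‖ ^ 2 := by
    rw [h1, normsq_eq]; exact h2
  calc ‖mclm (selId g)ᵀ x‖ = Real.sqrt (‖mclm (selId g)ᵀ x‖ ^ 2) :=
        (Real.sqrt_sq (norm_nonneg _)).symm
    _ ≤ Real.sqrt (‖x‖ ^ 2) := Real.sqrt_le_sqrt h3
    _ = ‖x‖ := Real.sqrt_sq (norm_nonneg _)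

lemma proj_bound {E : Type*} [NormedAddCommGroup E] [InnerProductSpace ℝ E]
    (T : E →L[ℝ] E) (hT : ∀ x, T (T x) = T x) (hk : 1 ≤ ‖T‖) (x : E) :
    ‖x - T x‖ ≤ ‖T‖ * ‖x‖ := by
  set y := x - T x with hy
  set z := T x with hz
  have hTy : T y = 0 := by simp [hy, hz, map_sub, hT]
  have hTz : T z = z := hT x
  set k := ‖T‖ ^ 2 with hkdef
  set a := ‖y‖ ^ 2 with hadef
  set b := (inner ℝ y z : ℝ) with hbdef
  set c := ‖z‖ ^ 2 with hcdef
  have key : ∀ t : ℝ, 0 ≤ ((k - 1) * c) * (t * t) + (2 * k * b) * t + k * a := by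
    intro t
    have h1 : T (y + t • z) = t • z := by
      rw [map_add, ContinuousLinearMap.map_smul, hTy, hTz, zero_add]
    have h2 : ‖T (y + t • z)‖ ≤ ‖T‖ * ‖y + t • z‖ := T.le_opNorm _
    rw [h1] at h2
    have h3 : ‖t • z‖ ^ 2 ≤ (‖T‖ * ‖y + t • z‖) ^ 2 :=
      pow_le_pow_left₀ (norm_nonneg _) h2 2
    have h4 : ‖y + t • z‖ ^ 2 = a + 2 * (t * b) + t ^ 2 * c := by
      rw [norm_add_sq_real, real_inner_smul_right, norm_smul]
      simp [hadef, hbdef, hcdef, mul_pow, sq_abs]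
    rw [norm_smul, mul_pow, mul_pow, h4] at h3
    simp only [Real.norm_eq_abs, sq_abs] at h3
    nlinarith [h3]
  have hdis := discrim_le_zero key
  rw [discrim] at hdis
  have hxyz : x = y + z := by simp [hy, hz]
  have hnx : ‖x‖ ^ 2 = a + 2 * b + c := by rw [hxyz, norm_add_sq_real]
  have ha : 0 ≤ a := sq_nonneg _
  have hc : 0 ≤ c := sq_nonneg _
  have hk1 : 1 ≤ k := by nlinarith [hk]
  have hS : 0 ≤ (k - 1) * a + k * c := by nlinarith
  have hsq : (2 * k * b) ^ 2 ≤ ((k - 1) * a + k * c) ^ 2 := by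
    nlinarith [sq_nonneg ((k - 1) * a - k * c), hdis]
  have goal2 : ‖y‖ ^ 2 ≤ (‖T‖ * ‖x‖) ^ 2 := by
    rw [mul_pow, ← hkdef, hnx, ← hadef]
    nlinarith [hsq, hS]
  calc ‖y‖ = Real.sqrt (‖y‖ ^ 2) := (Real.sqrt_sq (norm_nonneg _)).symm
    _ ≤ Real.sqrt ((‖T‖ * ‖x‖) ^ 2) := Real.sqrt_le_sqrt goal2
    _ = ‖T‖ * ‖x‖ := Real.sqrt_sq (by positivity)

/-- For the interpolatory projection `P = Q Q(I,:)⁻¹ E_Iᵀ` built from an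
orthonormal basis `Q` and a size-`r` index set `I` with `Q(I,:)` invertible
(and `0 < r < n`), the operator norm satisfies `‖P‖₂ = ‖Q(I,:)⁻¹‖₂`, `‖P‖₂ ≥ 1`,
and the interpolation error is bounded by
`‖Z − PZ‖₂ ≤ ‖Q(I,:)⁻¹‖₂ · ‖(I − QQᵀ)Z‖₂` for every `Z`. -/
theorem interpolatory_projection_norm_and_error
    {n r : ℕ} (hr : 0 < r) (hrn : r < n)
    (Q : Matrix (Fin n) (Fin r) ℝ) (hQ : Qᵀ * Q = 1)
    (g : Fin r → Fin n) (hg : Function.Injective g)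
    (hQg : IsUnit (Q.submatrix g id)) :
    specNorm (Q * (Q.submatrix g id)⁻¹ * (selId g)ᵀ) = specNorm (Q.submatrix g id)⁻¹ ∧
    1 ≤ specNorm (Q * (Q.submatrix g id)⁻¹ * (selId g)ᵀ) ∧
    ∀ (m : ℕ) (Z : Matrix (Fin n) (Fin m) ℝ),
      specNorm (Z - Q * (Q.submatrix g id)⁻¹ * (selId g)ᵀ * Z)
        ≤ specNorm (Q.submatrix g id)⁻¹ * specNorm ((1 - Q * Qᵀ) * Z) := by
  set S := Q.submatrix g id with hSdef
  set E := selId g with hEdef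
  set P := Q * S⁻¹ * Eᵀ with hPdef
  have hdet : IsUnit S.det := (Matrix.isUnit_iff_isUnit_det S).mp hQg
  have hSinv : S⁻¹ * S = 1 := Matrix.nonsing_inv_mul S hdet
  have hSinv' : S * S⁻¹ = 1 := Matrix.mul_nonsing_inv S hdet
  have hEQ : Eᵀ * Q = S := selId_T_mul g Q
  have hEE : Eᵀ * E = 1 := selId_T_mul_self hg
  have hPQ : P * Q = Q := by
    calc P * Q = Q * S⁻¹ * (Eᵀ * Q) := by rw [hPdef, Matrix.mul_assoc]
      _ = Q * (S⁻¹ * S) := by rw [hEQ, Matrix.mul_assoc]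
      _ = Q := by rw [hSinv, Matrix.mul_one]
  have hPE : P * E = Q * S⁻¹ := by
    calc P * E = Q * S⁻¹ * (Eᵀ * E) := by rw [hPdef, Matrix.mul_assoc]
      _ = Q * S⁻¹ := by rw [hEE, Matrix.mul_one]
  have hPP : P * P = P := by
    calc P * P = (P * Q) * (S⁻¹ * Eᵀ) := by
          rw [hPdef, ← Matrix.mul_assoc, ← Matrix.mul_assoc, Matrix.mul_assoc (P * Q)]
      _ = P := by rw [hPQ, hPdef, Matrix.mul_assoc]
  have hQiso : ∀ x, ‖mclm Q x‖ = ‖x‖ := mclm_isometry hQ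
  have hEiso : ∀ x, ‖mclm E x‖ = ‖x‖ := mclm_isometry hEE
  have hEt : ∀ x, ‖mclm Eᵀ x‖ ≤ ‖x‖ := mclm_selId_T_le hg
  have hPidem : ∀ x, mclm P (mclm P x) = mclm P x := by
    intro x; rw [← mclm_mul_apply, hPP]
  -- part 1
  have part1 : specNorm P = specNorm S⁻¹ := by
    rw [specNorm_eq_mclm, specNorm_eq_mclm]
    apply le_antisymm
    · apply ContinuousLinearMap.opNorm_le_bound _ (norm_nonneg (mclm S⁻¹))
      intro x
      have hx : mclm P x = mclm Q (mclm S⁻¹ (mclm Eᵀ x)) := by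
        rw [hPdef, Matrix.mul_assoc, mclm_mul_apply, mclm_mul_apply]
      rw [hx, hQiso]
      calc ‖mclm S⁻¹ (mclm Eᵀ x)‖ ≤ ‖mclm S⁻¹‖ * ‖mclm Eᵀ x‖ := (mclm S⁻¹).le_opNorm _
        _ ≤ ‖mclm S⁻¹‖ * ‖x‖ := mul_le_mul_of_nonneg_left (hEt x) (norm_nonneg _)
    · apply ContinuousLinearMap.opNorm_le_bound _ (norm_nonneg (mclm P))
      intro y
      have h1 : mclm Q (mclm S⁻¹ y) = mclm P (mclm E y) := by
        rw [← mclm_mul_apply, ← mclm_mul_apply, hPE]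
      have h2 : ‖mclm S⁻¹ y‖ = ‖mclm P (mclm E y)‖ := by rw [← h1, hQiso]
      rw [h2]
      calc ‖mclm P (mclm E y)‖ ≤ ‖mclm P‖ * ‖mclm E y‖ := (mclm P).le_opNorm _
        _ = ‖mclm P‖ * ‖y‖ := by rw [hEiso]
  -- part 2
  have part2 : 1 ≤ specNorm P := by
    rw [specNorm_eq_mclm]
    set e : EuclideanSpace ℝ (Fin r) := EuclideanSpace.single ⟨0, hr⟩ 1 with hedef
    have he : ‖e‖ = 1 := by simp [hedef, EuclideanSpace.norm_single]
    set x := mclm Q e with hxdef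
    have hx1 : ‖x‖ = 1 := by rw [hxdef, hQiso, he]
    have hPx : mclm P x = x := by rw [hxdef, ← mclm_mul_apply, hPQ]
    have := (mclm P).le_opNorm x
    rw [hPx, hx1, _root_.mul_one] at this
    exact this
  refine ⟨part1, part2, ?_⟩
  -- part 3
  intro m Z
  have hPQQ : P * (Q * Qᵀ) = Q * Qᵀ := by rw [← Matrix.mul_assoc, hPQ]
  have h5 : (1 - P) * (1 - Q * Qᵀ) = 1 - P := by
    rw [Matrix.mul_sub, Matrix.mul_one, Matrix.sub_mul, Matrix.one_mul, hPQQ, sub_self, sub_zero]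
  have hW : Z - P * Z = (1 - P) * ((1 - Q * Qᵀ) * Z) := by
    rw [← Matrix.mul_assoc, h5, Matrix.sub_mul, Matrix.one_mul]
  rw [hW, ← part1]
  set W := (1 - Q * Qᵀ) * Z with hWdef
  rw [specNorm_eq_mclm, specNorm_eq_mclm, specNorm_eq_mclm]
  have hcomp : mclm ((1 - P) * W) = (mclm (1 - P)).comp (mclm W) := by
    ext1 x; exact mclm_mul_apply _ _ x
  rw [hcomp]
  have hbound : ‖mclm (1 - P)‖ ≤ ‖mclm P‖ := by
    apply ContinuousLinearMap.opNorm_le_bound _ (norm_nonneg (mclm P))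
    intro x
    have h6 : mclm (1 - P) x = x - mclm P x := by
      simp [mclm, Matrix.toEuclideanLin_apply, Matrix.sub_mulVec, Matrix.one_mulVec]
    rw [h6]
    exact proj_bound (mclm P) hPidem (by rw [← specNorm_eq_mclm]; exact part2) x
  calc ‖(mclm (1 - P)).comp (mclm W)‖ ≤ ‖mclm (1 - P)‖ * ‖mclm W‖ :=
        ContinuousLinearMap.opNorm_comp_le _ _
    _ ≤ ‖mclm P‖ * ‖mclm W‖ := mul_le_mul_of_nonneg_right hbound (norm_nonneg _)
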